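/- Let H, U be separable real Hilbert spaces, B: U → H an injective Hilbert–Schmidt operator, (e_k)_{k∈ℕ} an orthonormal basis of U consisting of eigenvectors of B*B, and for n ∈ ℕ let P_n be the orthogonal projection onto span{e_0, …, e_{n−1}}. If X^n is a centered Gaussian random variable on H with covariance B P_n P_n* B* and X^∞ has covariance BB*, then for φ(x) = exp(−‖x‖²_H/2), E[φ(X^n)] = exp(−(1/2)·Σ_{k=0}^{n−1} log(1 + ‖B e_k‖²_H)). -/

import Mathlib

open MeasureTheory ProbabilityTheory Real

lemma gauss_exp_int (c : ℝ) (hc : 0 ≤ c) :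
    ∫ x, Real.exp (-(c * x ^ 2) / 2) ∂(gaussianReal 0 1)
      = Real.exp (-(1/2) * Real.log (1 + c)) := by
  have h1 : (0:ℝ) < 1 + c := by linarith
  have h2 : (0:ℝ) < 2 * π := by positivity
  have hsqrt : Real.sqrt (2 * π) ≠ 0 := by positivity
  rw [gaussianReal_of_var_ne_zero 0 one_ne_zero]
  have hmeas : Measurable fun x => (gaussianPDFReal 0 1 x).toNNReal :=
    (measurable_gaussianPDFReal 0 1).real_toNNReal
  rw [show (gaussianPDF 0 1) = fun x => ((gaussianPDFReal 0 1 x).toNNReal : ENNReal) from rfl,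
    integral_withDensity_eq_integral_smul hmeas]
  have hpt : ∀ x : ℝ, (gaussianPDFReal 0 1 x).toNNReal • Real.exp (-(c * x ^ 2) / 2)
      = (Real.sqrt (2 * π))⁻¹ * Real.exp (-((1 + c)/2) * x ^ 2) := by
    intro x
    rw [NNReal.smul_def, Real.coe_toNNReal _ (gaussianPDFReal_nonneg 0 1 x)]
    have hg : gaussianPDFReal 0 1 x = (Real.sqrt (2 * π))⁻¹ * Real.exp (-x ^ 2 / 2) := by
      simp [gaussianPDFReal]
    rw [hg, smul_eq_mul, mul_assoc, ← Real.exp_add]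
    congr 1
    ring
  simp_rw [hpt]
  rw [integral_const_mul, integral_gaussian ((1 + c)/2)]
  have hdiv : π / ((1 + c)/2) = (2 * π) / (1 + c) := by
    field_simp
  rw [hdiv, Real.sqrt_div h2.le]
  have h3 : (Real.sqrt (2 * π))⁻¹ * (Real.sqrt (2 * π) / Real.sqrt (1 + c))
      = (Real.sqrt (1 + c))⁻¹ := by
    field_simp
  rw [h3, Real.sqrt_eq_rpow, ← Real.rpow_neg h1.le, Real.rpow_def_of_pos h1]
  congr 1
  ring

/-- Gaussian expectation of `φ(x) = exp(−‖x‖²/2)` for noise discretizations: if `B : U → H`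
is an injective Hilbert–Schmidt operator, `(e_k)` an orthonormal basis of `U` of
eigenvectors of `B*B`, and `Xⁿ = Σ_{k<n} g_k • B e_k` is a centered Gaussian with
covariance `B P_n P_n* B*` (realized via i.i.d. standard Gaussians `g_k`), then
`E[φ(Xⁿ)] = exp(−(1/2)·Σ_{k<n} log(1+‖B e_k‖²))`. -/
theorem gaussian_exp_formula {U H : Type*}
    [NormedAddCommGroup U] [InnerProductSpace ℝ U] [CompleteSpace U]
    [NormedAddCommGroup H] [InnerProductSpace ℝ H] [CompleteSpace H]
    (B : U →L[ℝ] H) (hBinj : Function.Injective B)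
    (e : ℕ → U) (he : Orthonormal ℝ e)
    (heig : ∀ k : ℕ, (ContinuousLinearMap.adjoint B ∘L B) (e k) = (‖B (e k)‖ ^ 2) • e k)
    (hHS : Summable fun k => ‖B (e k)‖ ^ 2)
    {Ω : Type*} [MeasurableSpace Ω] (P : Measure Ω) [IsProbabilityMeasure P]
    (g : ℕ → Ω → ℝ) (hgmeas : ∀ k, Measurable (g k))
    (hgauss : ∀ k, Measure.map (g k) P = gaussianReal 0 1)
    (hindep : iIndepFun g P)
    (X : ℕ → Ω → H)
    (hX : ∀ (n : ℕ) (ω : Ω), X n ω = ∑ k ∈ Finset.range n, g k ω • B (e k)) :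
    ∀ n : ℕ, ∫ ω, Real.exp (-‖X n ω‖ ^ 2 / 2) ∂P
      = Real.exp (-(1/2) * ∑ k ∈ Finset.range n, Real.log (1 + ‖B (e k)‖ ^ 2)) := by
  intro n
  -- orthogonality of the images `B e_k`
  have hinner : ∀ j k : ℕ, (inner ℝ (B (e j)) (B (e k)) : ℝ)
      = if j = k then ‖B (e k)‖ ^ 2 else 0 := by
    intro j k
    have h1 : (inner ℝ (B (e j)) (B (e k)) : ℝ)
        = inner ℝ (e j) ((ContinuousLinearMap.adjoint B ∘L B) (e k)) := by
      rw [ContinuousLinearMap.comp_apply, ContinuousLinearMap.adjoint_inner_right]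
    rw [h1, heig k, real_inner_smul_right, orthonormal_iff_ite.mp he j k]
    simp [mul_ite]
  -- squared norm of `X n ω`
  have hnorm : ∀ ω, ‖X n ω‖ ^ 2
      = ∑ k ∈ Finset.range n, (g k ω) ^ 2 * ‖B (e k)‖ ^ 2 := by
    intro ω
    rw [hX, ← real_inner_self_eq_norm_sq, inner_sum]
    refine Finset.sum_congr rfl fun k hk => ?_
    rw [sum_inner, Finset.sum_eq_single k]
    · rw [real_inner_smul_left, real_inner_smul_right, hinner, if_pos rfl]; ring
    · intro j _ hjk
      rw [real_inner_smul_left, real_inner_smul_right, hinner, if_neg hjk]; ring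
    · intro hk'; exact absurd hk hk'
  -- the independent summands
  set Y : ℕ → Ω → ℝ := fun k => (fun x : ℝ => -(‖B (e k)‖ ^ 2 * x ^ 2) / 2) ∘ g k with hY
  have hmeasφ : ∀ k, Measurable fun x : ℝ => -(‖B (e k)‖ ^ 2 * x ^ 2) / 2 := by
    intro k; fun_prop
  have hmeasY : ∀ k, Measurable (Y k) := fun k => (hmeasφ k).comp (hgmeas k)
  have hYindep : iIndepFun Y P :=
    hindep.comp _ hmeasφ
  -- rewrite the integrand as `exp (1 * ∑ Y k)`
  have hstep : (fun ω => Real.exp (-‖X n ω‖ ^ 2 / 2))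
      = fun ω => Real.exp (1 * (∑ k ∈ Finset.range n, Y k) ω) := by
    funext ω
    rw [one_mul, Finset.sum_apply, hnorm ω]
    congr 1
    rw [neg_div, Finset.sum_div, ← Finset.sum_neg_distrib]
    refine Finset.sum_congr rfl fun k _ => ?_
    simp only [hY, Function.comp_apply]
    ring
  have hmgf : ∫ ω, Real.exp (-‖X n ω‖ ^ 2 / 2) ∂P
      = mgf (∑ k ∈ Finset.range n, Y k) P 1 := by
    rw [hstep]; rfl
  rw [hmgf, iIndepFun.mgf_sum hYindep hmeasY]
  -- compute each factor
  have hkey : ∀ k, mgf (Y k) P 1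
      = Real.exp (-(1/2) * Real.log (1 + ‖B (e k)‖ ^ 2)) := by
    intro k
    have hφ : Measurable fun x : ℝ => Real.exp (-(‖B (e k)‖ ^ 2 * x ^ 2) / 2) :=
      (hmeasφ k).exp
    have h1 : mgf (Y k) P 1
        = ∫ ω, (fun x : ℝ => Real.exp (-(‖B (e k)‖ ^ 2 * x ^ 2) / 2)) (g k ω) ∂P := by
      unfold mgf
      congr 1 with ω
      simp [hY]
    rw [h1, ← integral_map (hgmeas k).aemeasurable hφ.aestronglyMeasurable, hgauss k]
    exact gauss_exp_int _ (sq_nonneg _)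
  rw [Finset.prod_congr rfl fun k _ => hkey k, Finset.mul_sum, Real.exp_sum]
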